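/- arXiv:2009.04821 — 2 statements merged into one kernel-verified Lean document; each statement's English description precedes it below -/
import Mathlib

section
/- Given an ILPDC C and an ILFST T, there exists an ILPDC N such that for all binary strings x, N(x) = C(T(x)); moreover if C is an ILUPDC then N can be taken to be an ILUPDC. -/
/-- A finite-state transducer with `n` states. -/
structure FST where
  n : ℕ
  pos : 0 < n
  q0 : Fin n
  δ : Fin n → Bool → Fin n
  ν : Fin n → Bool → List Bool

def FST.runFrom (T : FST) : Fin T.n → List Bool → Fin T.n × List Bool
  | q, [] => (q, [])
  | q, b :: x =>
    let r := T.runFrom (T.δ q b) x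
    (r.1, T.ν q b ++ r.2)

/-- The output of the transducer on input `x`. -/
def FST.output (T : FST) (x : List Bool) : List Bool := (T.runFrom T.q0 x).2

/-- The state reached after reading `x`. -/
def FST.finalState (T : FST) (x : List Bool) : Fin T.n := (T.runFrom T.q0 x).1

/-- Information losslessness: the pair (output, final state) identifies the input. -/
def FST.IL (T : FST) : Prop :=
  Function.Injective fun x => (T.output x, T.finalState x)

/-- A (bounded) pushdown compressor. Stack symbols are `Bool` (`false` = `0`),
with the bottom-of-stack marker `z₀` represented implicitly: the stack is a
`List Bool` and an empty list means the stack holds only `z₀` (top symbol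
`none`).  A transition `δ q b a = some (q', w)` reads bit `b` with top stack
symbol `a`, pops it (if `a ≠ none`; `z₀` is never popped), pushes the word `w`
and moves to `q'`.  `dLam` gives λ-transitions, which pop the top symbol
without reading input; at most `c` of them happen consecutively. -/
structure PDC where
  n : ℕ
  pos : 0 < n
  q0 : Fin n
  c : ℕ
  δ : Fin n → Bool → Option Bool → Option (Fin n × List Bool)
  dLam : Fin n → Bool → Option (Fin n)
  ν : Fin n → Bool → Option Bool → List Bool

def PDC.lamSteps (M : PDC) : ℕ → Fin M.n → List Bool → Fin M.n × List Bool
  | 0, q, s => (q, s)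
  | fuel + 1, q, s =>
    match s with
    | [] => (q, [])
    | a :: rest =>
      match M.dLam q a with
      | none => (q, a :: rest)
      | some q' => M.lamSteps fuel q' rest

def PDC.readBit (M : PDC) (q : Fin M.n) (s : List Bool) (b : Bool) :
    Option (Fin M.n × List Bool × List Bool) :=
  let p := M.lamSteps M.c q s
  match p.2 with
  | [] => (M.δ p.1 b none).map fun r => (r.1, r.2, M.ν p.1 b none)
  | a :: rest => (M.δ p.1 b (some a)).map fun r => (r.1, r.2 ++ rest, M.ν p.1 b (some a))

/-- Run the compressor from state `q` with stack contents `s` on input `x`,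
returning (final state, final stack, output), or `none` if undefined. -/
def PDC.run (M : PDC) : Fin M.n → List Bool → List Bool → Option (Fin M.n × List Bool × List Bool)
  | q, s, [] => some (q, s, [])
  | q, s, b :: x =>
    match M.readBit q s b with
    | none => none
    | some r => (M.run r.1 r.2.1 x).map fun r' => (r'.1, r'.2.1, r.2.2 ++ r'.2.2)

/-- The output of the compressor on input `x` (from the start configuration). -/
def PDC.output (M : PDC) (x : List Bool) : List Bool :=
  ((M.run M.q0 [] x).map fun r => r.2.2).getD []

/-- Information losslessness: the compressor is total and the pair
(final state, output) uniquely identifies the input. -/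
def PDC.IL (M : PDC) : Prop :=
  (∀ x, (M.run M.q0 [] x).isSome) ∧
  Function.Injective fun x => (M.run M.q0 [] x).map fun r => (r.1, r.2.2)

/-- Unary-stack pushdown compressors only ever push the symbol `0` (stack
alphabet `{0, z₀}`). -/
def PDC.UnaryStack (M : PDC) : Prop :=
  ∀ q b a r, M.δ q b a = some r → ∀ s ∈ r.2, s = false

namespace Comp

variable (C : PDC)

def simLam : ℕ → Fin C.n → List Bool → Bool → Option (Fin C.n × List Bool)
  | 0, q, s, _ => some (q, s)
  | fuel+1, q, s, low =>
    match s with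
    | [] => if low then some (q, []) else none
    | a :: rest =>
      match C.dLam q a with
      | none => some (q, a :: rest)
      | some q' => simLam fuel q' rest low

def simStep (q : Fin C.n) (s : List Bool) (low : Bool) (b : Bool) :
    Option (Fin C.n × List Bool × List Bool) :=
  match simLam C C.c q s low with
  | none => none
  | some (q1, s1) =>
    match s1 with
    | [] => if low then (C.δ q1 b none).map fun r => (r.1, r.2, C.ν q1 b none) else none
    | a :: rest => (C.δ q1 b (some a)).map fun r => (r.1, r.2 ++ rest, C.ν q1 b (some a))

def simRun : List Bool → Fin C.n → List Bool → Bool → Option (Fin C.n × List Bool × List Bool)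
  | [], q, s, _ => some (q, s, [])
  | b :: bs, q, s, low =>
    match simStep C q s low b with
    | none => none
    | some (q1, s1, o1) =>
      match simRun bs q1 s1 low with
      | none => none
      | some (q2, s2, o2) => some (q2, s2, o1 ++ o2)

lemma simLam_true : ∀ fuel q s, simLam C fuel q s true = some (C.lamSteps fuel q s)
  | 0, q, s => rfl
  | fuel+1, q, [] => rfl
  | fuel+1, q, a :: rest => by
    simp only [simLam, PDC.lamSteps]
    cases C.dLam q a with
    | none => rfl
    | some q' => exact simLam_true fuel q' rest

lemma simStep_true (q : Fin C.n) (s : List Bool) (b : Bool) :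
    simStep C q s true b = C.readBit q s b := by
  simp only [simStep, simLam_true, PDC.readBit]
  rcases C.lamSteps C.c q s with ⟨q1, s1⟩
  cases s1 <;> rfl

lemma simRun_true : ∀ bs q s, simRun C bs q s true = C.run q s bs
  | [], q, s => rfl
  | b :: bs, q, s => by
    simp only [simRun, simStep_true, PDC.run]
    cases C.readBit q s b with
    | none => rfl
    | some r =>
      obtain ⟨q1, s1, o1⟩ := r
      simp only
      rw [simRun_true bs q1 s1]
      cases C.run q1 s1 bs <;> rfl

lemma simLam_false : ∀ fuel (q : Fin C.n) s (t : List Bool), fuel < s.length →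
    ∃ q1 s1, simLam C fuel q s false = some (q1, s1) ∧
      C.lamSteps fuel q (s ++ t) = (q1, s1 ++ t) ∧ s.length ≤ s1.length + fuel
  | 0, q, s, t, _ => ⟨q, s, rfl, rfl, by omega⟩
  | fuel+1, q, s, t, h => by
    match s with
    | [] => simp at h
    | a :: rest =>
      simp only [simLam, List.cons_append, PDC.lamSteps]
      cases hd : C.dLam q a with
      | none => exact ⟨q, a :: rest, rfl, rfl, by simp⟩
      | some q' =>
        obtain ⟨q1, s1, h1, h2, h3⟩ := simLam_false fuel q' rest t
          (by simp only [List.length_cons] at h; omega)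
        exact ⟨q1, s1, h1, h2, by simp only [List.length_cons] at h ⊢; omega⟩

lemma simStep_false (q : Fin C.n) (s t : List Bool) (b : Bool) (r : Fin C.n × List Bool × List Bool)
    (hlen : C.c + 1 ≤ s.length) (h : C.readBit q (s ++ t) b = some r) :
    ∃ s1, simStep C q s false b = some (r.1, s1, r.2.2) ∧ r.2.1 = s1 ++ t ∧
      s.length ≤ s1.length + (C.c + 1) := by
  obtain ⟨q1, s1, h1, h2, h3⟩ := simLam_false C C.c q s t (by omega)
  rw [PDC.readBit, h2] at h
  match hs1 : s1 with
  | [] => simp [hs1] at h3; omega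
  | a :: rest =>
    simp only [List.cons_append] at h
    rw [simStep, h1]
    simp only
    cases hδ : C.δ q1 b (some a) with
    | none => rw [hδ] at h; simp at h
    | some w =>
      rw [hδ] at h
      simp only [Option.map_some] at h
      obtain rfl : (w.1, w.2 ++ (rest ++ t), C.ν q1 b (some a)) = r := by
        exact Option.some.inj h
      refine ⟨w.2 ++ rest, rfl, by simp, ?_⟩
      subst hs1; simp only [List.length_cons, List.length_append] at h3 ⊢; omega

lemma simRun_false : ∀ (bits : List Bool) (q : Fin C.n) (s t : List Bool)
    (r : Fin C.n × List Bool × List Bool),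
    (C.c + 1) * bits.length < s.length → C.run q (s ++ t) bits = some r →
    ∃ s1, simRun C bits q s false = some (r.1, s1, r.2.2) ∧ r.2.1 = s1 ++ t
  | [], q, s, t, r, _, h => by
    rw [PDC.run] at h
    obtain rfl := Option.some.inj h
    exact ⟨s, rfl, rfl⟩
  | b :: bs, q, s, t, r, hlen, h => by
    rw [PDC.run] at h
    cases hrb : C.readBit q (s ++ t) b with
    | none => rw [hrb] at h; simp at h
    | some r1 =>
      rw [hrb] at h
      simp only at h
      cases hrun : C.run r1.1 r1.2.1 bs with
      | none => rw [hrun] at h; simp at h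
      | some r2 =>
        rw [hrun, Option.map_some] at h
        obtain rfl := Option.some.inj h
        obtain ⟨s1, hs1, hs1', hs1len⟩ := simStep_false C q s t b r1
          (by simp only [List.length_cons] at hlen
              have hmul : (C.c + 1) * (bs.length + 1) = (C.c + 1) * bs.length + (C.c + 1) := by
                ring
              omega) hrb
        obtain ⟨s2, hs2, hs2'⟩ := simRun_false bs r1.1 s1 t r2
          (by simp only [List.length_cons] at hlen ⊢
              have hmul : (C.c + 1) * (bs.length + 1) = (C.c + 1) * bs.length + (C.c + 1) := by
                ring
              omega) (by rw [← hs1']; exact hrun)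
        refine ⟨s2, ?_, hs2'⟩
        rw [simRun, hs1]
        simp only
        rw [hs2]

lemma run_append (M : PDC) : ∀ (u v : List Bool) (q : Fin M.n) (s : List Bool),
    M.run q s (u ++ v) =
      (M.run q s u).bind fun r => (M.run r.1 r.2.1 v).map fun r' =>
        (r'.1, r'.2.1, r.2.2 ++ r'.2.2)
  | [], v, q, s => by
    simp only [List.nil_append, PDC.run, Option.bind_some]
    cases M.run q s v with
    | none => rfl
    | some r => simp
  | b :: u, v, q, s => by
    simp only [List.cons_append, PDC.run]
    cases M.readBit q s b with
    | none => rfl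
    | some r =>
      simp only [Option.bind_some]
      rw [run_append M u v r.1 r.2.1]
      cases M.run r.1 r.2.1 u with
      | none => rfl
      | some r1 =>
        simp only [Option.bind_some, Option.map_some, Option.map_map]
        cases M.run r1.1 r1.2.1 v with
        | none => rfl
        | some r2 => simp [List.append_assoc]

lemma lamSteps_mem (M : PDC) : ∀ fuel (q : Fin M.n) s z, z ∈ (M.lamSteps fuel q s).2 → z ∈ s
  | 0, q, s, z => fun h => h
  | fuel+1, q, s, z => by
    match s with
    | [] => simp [PDC.lamSteps]
    | a :: rest =>
      simp only [PDC.lamSteps]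
      cases M.dLam q a with
      | none => exact fun h => h
      | some q' => exact fun h => List.mem_cons_of_mem a (lamSteps_mem M fuel q' rest z h)

lemma readBit_false (M : PDC) (hu : M.UnaryStack) (q : Fin M.n) (s : List Bool) (b : Bool)
    (r : Fin M.n × List Bool × List Bool) (hs : ∀ z ∈ s, z = false)
    (h : M.readBit q s b = some r) : ∀ z ∈ r.2.1, z = false := by
  rw [PDC.readBit] at h
  cases hp : (M.lamSteps M.c q s).2 with
  | nil =>
    rw [hp] at h
    simp only at h
    cases hδ : M.δ (M.lamSteps M.c q s).1 b none with
    | none => rw [hδ] at h; simp at h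
    | some w =>
      rw [hδ, Option.map_some] at h
      obtain rfl := Option.some.inj h
      exact fun z hz => hu _ _ _ _ hδ z hz
  | cons a rest =>
    rw [hp] at h
    simp only at h
    cases hδ : M.δ (M.lamSteps M.c q s).1 b (some a) with
    | none => rw [hδ] at h; simp at h
    | some w =>
      rw [hδ, Option.map_some] at h
      obtain rfl := Option.some.inj h
      intro z hz
      rcases List.mem_append.mp hz with hz | hz
      · exact hu _ _ _ _ hδ z hz
      · exact hs z (lamSteps_mem M M.c q s z (by rw [hp]; exact List.mem_cons_of_mem a hz))

lemma run_false (M : PDC) (hu : M.UnaryStack) : ∀ (x : List Bool) (q : Fin M.n) (s : List Bool)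
    (r : Fin M.n × List Bool × List Bool), (∀ z ∈ s, z = false) →
    M.run q s x = some r → ∀ z ∈ r.2.1, z = false
  | [], q, s, r, hs, h => by
    rw [PDC.run] at h; obtain rfl := Option.some.inj h; exact hs
  | b :: x, q, s, r, hs, h => by
    rw [PDC.run] at h
    cases hrb : M.readBit q s b with
    | none => rw [hrb] at h; simp at h
    | some r1 =>
      rw [hrb] at h
      simp only at h
      cases hrun : M.run r1.1 r1.2.1 x with
      | none => rw [hrun] at h; simp at h
      | some r2 =>
        rw [hrun, Option.map_some] at h
        obtain rfl := Option.some.inj h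
        exact run_false M hu x r1.1 r1.2.1 r2 (readBit_false M hu q s b r1 hs hrb) hrun

end Comp

namespace Comp

noncomputable instance bufFintype (k : ℕ) : Fintype {l : List Bool // l.length ≤ k} :=
  Fintype.ofInjective (fun l => (fun i : Fin (k+1) => l.val[i.val]?)) (by
    intro a b h
    ext1
    apply List.ext_getElem?
    intro n
    by_cases hn : n < k + 1
    · exact congrFun h ⟨n, hn⟩
    · rw [List.getElem?_eq_none (le_trans a.2 (by omega)),
        List.getElem?_eq_none (le_trans b.2 (by omega))])

variable (C : PDC) (T : FST)

/-- max output length of a transition of `T`. -/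
def dmax : ℕ := Finset.univ.sup fun p : Fin T.n × Bool => (T.ν p.1 p.2).length

lemma len_nu_le (qT : Fin T.n) (b : Bool) : (T.ν qT b).length ≤ dmax T :=
  Finset.le_sup (f := fun p : Fin T.n × Bool => (T.ν p.1 p.2).length) (Finset.mem_univ (qT, b))

/-- depth bound for the buffer. -/
def mm : ℕ := (C.c + 1) * dmax T + 1

abbrev QQ := Fin T.n × Fin C.n × {l : List Bool // l.length ≤ mm C T}

instance : Nonempty (QQ C T) := ⟨(T.q0, C.q0, ⟨[], by simp⟩)⟩

noncomputable def ee : QQ C T ≃ Fin (Fintype.card (QQ C T)) := Fintype.equivFin _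

noncomputable def NNdLam (p : QQ C T) (a : Bool) : Option (Fin (Fintype.card (QQ C T))) :=
  if h : p.2.2.val.length < mm C T then
    some (ee C T (p.1, p.2.1, ⟨p.2.2.val ++ [a], by
      rw [List.length_append, List.length_singleton]; omega⟩))
  else none

noncomputable def NNδ (u : Bool) (p : QQ C T) (b : Bool) (a : Option Bool) :
    Option (Fin (Fintype.card (QQ C T)) × List Bool) :=
  match simRun C (T.ν p.1 b) p.2.1 p.2.2.val a.isNone with
  | none => none
  | some (qC', s', _) =>
    some (ee C T (T.δ p.1 b, qC', ⟨[], by simp⟩),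
      if u then (s' ++ a.toList).map (fun _ => false) else s' ++ a.toList)

noncomputable def NNν (p : QQ C T) (b : Bool) (a : Option Bool) : List Bool :=
  match simRun C (T.ν p.1 b) p.2.1 p.2.2.val a.isNone with
  | none => []
  | some (_, _, o) => o

noncomputable def NN (u : Bool) : PDC where
  n := Fintype.card (QQ C T)
  pos := Fintype.card_pos
  q0 := ee C T (T.q0, C.q0, ⟨[], by simp⟩)
  c := mm C T
  dLam := fun q a => NNdLam C T ((ee C T).symm q) a
  δ := fun q b a => NNδ C T u ((ee C T).symm q) b a
  ν := fun q b a => NNν C T ((ee C T).symm q) b a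

lemma NN_dLam_eq (u : Bool) (x : QQ C T) (a : Bool) :
    (NN C T u).dLam (ee C T x) a = NNdLam C T x a := by
  show NNdLam C T ((ee C T).symm (ee C T x)) a = NNdLam C T x a
  rw [Equiv.symm_apply_apply]

lemma NN_δ_eq (u : Bool) (x : QQ C T) (b : Bool) (a : Option Bool) :
    (NN C T u).δ (ee C T x) b a = NNδ C T u x b a := by
  show NNδ C T u ((ee C T).symm (ee C T x)) b a = NNδ C T u x b a
  rw [Equiv.symm_apply_apply]

lemma NN_ν_eq (u : Bool) (x : QQ C T) (b : Bool) (a : Option Bool) :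
    (NN C T u).ν (ee C T x) b a = NNν C T x b a := by
  show NNν C T ((ee C T).symm (ee C T x)) b a = NNν C T x b a
  rw [Equiv.symm_apply_apply]

/-- the "clean" states of `N` (empty buffer). -/
noncomputable def cl (qT : Fin T.n) (qC : Fin C.n) : Fin (Fintype.card (QQ C T)) :=
  ee C T (qT, qC, ⟨[], by simp⟩)

lemma map_allf (l : List Bool) (h : ∀ z ∈ l, z = false) : l.map (fun _ => false) = l := by
  induction l with
  | nil => rfl
  | cons a l ih =>
    simp only [List.map_cons, List.cons.injEq]
    exact ⟨(h a (by simp)).symm, ih fun z hz => h z (List.mem_cons_of_mem a hz)⟩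

lemma buflen (buf S : List Bool) (fuel : ℕ) (hb : buf.length + fuel ≤ mm C T) :
    (buf ++ S.take fuel).length ≤ mm C T := by
  rw [List.length_append, List.length_take]
  omega

lemma NN_dLam (u : Bool) (qT : Fin T.n) (qC : Fin C.n) (buf : {l : List Bool // l.length ≤ mm C T})
    (a : Bool) (h : buf.val.length < mm C T) :
    (NN C T u).dLam (ee C T (qT, qC, buf)) a =
      some (ee C T (qT, qC, ⟨buf.val ++ [a], by
        rw [List.length_append, List.length_singleton]; omega⟩)) := by
  rw [NN_dLam_eq, NNdLam, dif_pos h]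

lemma NN_δ_some (u : Bool) (qT : Fin T.n) (qC : Fin C.n)
    (buf : {l : List Bool // l.length ≤ mm C T}) (b : Bool) (a : Option Bool)
    (qC' : Fin C.n) (s' o : List Bool)
    (h : simRun C (T.ν qT b) qC buf.val a.isNone = some (qC', s', o)) :
    (NN C T u).δ (ee C T (qT, qC, buf)) b a =
      some (cl C T (T.δ qT b) qC',
        if u then (s' ++ a.toList).map (fun _ => false) else s' ++ a.toList) := by
  rw [NN_δ_eq, NNδ]
  simp only [h]
  rfl

lemma NN_ν_some (u : Bool) (qT : Fin T.n) (qC : Fin C.n)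
    (buf : {l : List Bool // l.length ≤ mm C T}) (b : Bool) (a : Option Bool)
    (qC' : Fin C.n) (s' o : List Bool)
    (h : simRun C (T.ν qT b) qC buf.val a.isNone = some (qC', s', o)) :
    (NN C T u).ν (ee C T (qT, qC, buf)) b a = o := by
  rw [NN_ν_eq, NNν]
  simp only [h]

lemma NN_lamSteps (u : Bool) :
    ∀ (fuel : ℕ) (qT : Fin T.n) (qC : Fin C.n) (buf : {l : List Bool // l.length ≤ mm C T})
      (S : List Bool) (hb : buf.val.length + fuel ≤ mm C T),
    (NN C T u).lamSteps fuel (ee C T (qT, qC, buf)) S =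
      (ee C T (qT, qC, ⟨buf.val ++ S.take fuel, buflen C T buf.val S fuel hb⟩), S.drop fuel)
  | 0, qT, qC, buf, S, hb => by
    refine Prod.ext (congrArg (ee C T) ?_) rfl
    simp [Prod.ext_iff, Subtype.ext_iff]
  | fuel+1, qT, qC, buf, S, hb => by
    match S with
    | [] =>
      simp only [PDC.lamSteps, List.take_nil, List.drop_nil, Prod.mk.injEq]
      refine Prod.ext (congrArg (ee C T) ?_) rfl
      simp [Prod.ext_iff, Subtype.ext_iff]
    | a :: rest =>
      simp only [PDC.lamSteps]
      rw [NN_dLam C T u qT qC buf a (by omega)]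
      simp only
      rw [NN_lamSteps u fuel qT qC ⟨buf.val ++ [a], by
        rw [List.length_append, List.length_singleton]; omega⟩ rest
        (by simp only [List.length_append, List.length_singleton]; omega)]
      simp only [List.take_succ_cons, List.drop_succ_cons, Prod.mk.injEq]
      refine Prod.ext (congrArg (ee C T) ?_) rfl
      simp [Prod.ext_iff, Subtype.ext_iff]

lemma NN_readBit (u : Bool) (qT : Fin T.n) (qC : Fin C.n) (S : List Bool) (b : Bool)
    (r : Fin C.n × List Bool × List Bool)
    (hu : u = true → C.UnaryStack ∧ ∀ z ∈ S, z = false)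
    (h : C.run qC S (T.ν qT b) = some r) :
    (NN C T u).readBit (cl C T qT qC) S b =
      some (cl C T (T.δ qT b) r.1, r.2.1, r.2.2) := by
  obtain ⟨qC', S', out⟩ := r
  have hl := NN_lamSteps C T u (mm C T) qT qC ⟨[], by simp⟩ S (by simp)
  unfold PDC.readBit
  show (match ((NN C T u).lamSteps (NN C T u).c (cl C T qT qC) S).2 with
    | [] => ((NN C T u).δ ((NN C T u).lamSteps (NN C T u).c (cl C T qT qC) S).1 b none).map
        fun (r : Fin (NN C T u).n × List Bool) => (r.1, r.2, (NN C T u).ν ((NN C T u).lamSteps (NN C T u).c (cl C T qT qC) S).1 b none)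
    | a :: rest => ((NN C T u).δ ((NN C T u).lamSteps (NN C T u).c (cl C T qT qC) S).1 b (some a)).map
        fun (r : Fin (NN C T u).n × List Bool) => (r.1, r.2 ++ rest,
          (NN C T u).ν ((NN C T u).lamSteps (NN C T u).c (cl C T qT qC) S).1 b (some a))) = _
  rw [show (NN C T u).c = mm C T from rfl]
  rw [show cl C T qT qC = ee C T (qT, qC, ⟨[], by simp⟩) from rfl]
  rw [hl]
  simp only
  cases hd : S.drop (mm C T) with
  | nil =>
    have hSlen : S.length ≤ mm C T := by
      have := congrArg List.length hd
      rw [List.length_drop] at this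
      simp only [List.length_nil] at this
      omega
    have htake : S.take (mm C T) = S := List.take_of_length_le hSlen
    have hsim : simRun C (T.ν qT b) qC
        (([] : List Bool) ++ S.take (mm C T)) (Option.isNone (none : Option Bool)) =
        some (qC', S', out) := by
      rw [List.nil_append, htake]
      show simRun C (T.ν qT b) qC S true = _
      rw [simRun_true]
      exact h
    show (Option.map
        (fun (r : Fin (NN C T u).n × List Bool) => (r.1, r.2,
          (NN C T u).ν (ee C T (qT, qC,
            ⟨[] ++ List.take (mm C T) S, buflen C T [] S (mm C T) (by simp)⟩)) b none))
        ((NN C T u).δ (ee C T (qT, qC,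
          ⟨[] ++ List.take (mm C T) S, buflen C T [] S (mm C T) (by simp)⟩)) b none)) = _
    rw [NN_δ_some C T u qT qC _ b none qC' S' out hsim,
      NN_ν_some C T u qT qC _ b none qC' S' out hsim]
    simp only [Option.map_some, Option.toList_none, List.append_nil]
    cases u with
    | false => rfl
    | true =>
      have hall : ∀ z ∈ S', z = false :=
        run_false C ((hu rfl).1) _ qC S _ ((hu rfl).2) h
      rw [if_pos rfl, map_allf S' hall]
      rfl
  | cons a rest =>
    have hSlen : mm C T ≤ S.length := by
      have := congrArg List.length hd
      rw [List.length_drop] at this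
      simp only [List.length_cons] at this
      omega
    have htlen : (S.take (mm C T)).length = mm C T := by
      rw [List.length_take]; omega
    have hbits : (C.c + 1) * (T.ν qT b).length < (S.take (mm C T)).length := by
      rw [htlen]
      have h1 : (C.c + 1) * (T.ν qT b).length ≤ (C.c + 1) * dmax T :=
        Nat.mul_le_mul_left _ (len_nu_le T qT b)
      rw [mm]; omega
    have h' : C.run qC (S.take (mm C T) ++ (a :: rest)) (T.ν qT b) = some (qC', S', out) := by
      rw [← hd, List.take_append_drop]
      exact h
    obtain ⟨s1, hsim, hstack⟩ :=
      simRun_false C (T.ν qT b) qC (S.take (mm C T)) (a :: rest) (qC', S', out) hbits h'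
    simp only at hsim hstack
    have hsim' : simRun C (T.ν qT b) qC
        (([] : List Bool) ++ S.take (mm C T)) (Option.isNone (some a)) = some (qC', s1, out) := by
      rw [List.nil_append]
      exact hsim
    show (Option.map
        (fun (r : Fin (NN C T u).n × List Bool) => (r.1, r.2 ++ rest,
          (NN C T u).ν (ee C T (qT, qC,
            ⟨[] ++ List.take (mm C T) S, buflen C T [] S (mm C T) (by simp)⟩)) b (some a)))
        ((NN C T u).δ (ee C T (qT, qC,
          ⟨[] ++ List.take (mm C T) S, buflen C T [] S (mm C T) (by simp)⟩)) b (some a))) = _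
    rw [NN_δ_some C T u qT qC _ b (some a) qC' s1 out hsim',
      NN_ν_some C T u qT qC _ b (some a) qC' s1 out hsim']
    simp only [Option.map_some, Option.toList_some]
    have hword : (if u then (s1 ++ [a]).map (fun _ => false) else s1 ++ [a]) = s1 ++ [a] := by
      cases u with
      | false => rfl
      | true =>
        rw [if_pos rfl]
        apply map_allf
        intro z hz
        rcases List.mem_append.mp hz with hz | hz
        · have hall : ∀ z ∈ S', z = false :=
            run_false C ((hu rfl).1) _ qC S _ ((hu rfl).2) h
          exact hall z (by rw [hstack]; exact List.mem_append_left _ hz)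
        · have ha : a ∈ S := List.drop_subset (mm C T) S (by rw [hd]; simp)
          rw [List.mem_singleton] at hz
          rw [hz]
          exact (hu rfl).2 a ha
    rw [hword]
    exact congrArg (fun l => some (cl C T (T.δ qT b) qC', l, out))
      (by rw [hstack, List.append_assoc, List.singleton_append])

lemma NN_run (u : Bool) : ∀ (x : List Bool) (qT : Fin T.n) (qC : Fin C.n) (S : List Bool)
    (r : Fin C.n × List Bool × List Bool),
    (u = true → C.UnaryStack ∧ ∀ z ∈ S, z = false) →
    C.run qC S (T.runFrom qT x).2 = some r →
    (NN C T u).run (cl C T qT qC) S x =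
      some (cl C T (T.runFrom qT x).1 r.1, r.2.1, r.2.2)
  | [], qT, qC, S, r, hu, h => by
    rw [FST.runFrom] at h ⊢
    rw [PDC.run] at h
    obtain rfl := Option.some.inj h
    rfl
  | b :: x, qT, qC, S, r, hu, h => by
    have hout : (T.runFrom qT (b :: x)).2 = T.ν qT b ++ (T.runFrom (T.δ qT b) x).2 := by
      rw [FST.runFrom]
    have hst : (T.runFrom qT (b :: x)).1 = (T.runFrom (T.δ qT b) x).1 := by
      rw [FST.runFrom]
    rw [hout, run_append] at h
    cases h1 : C.run qC S (T.ν qT b) with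
    | none => rw [h1] at h; simp at h
    | some r1 =>
      rw [h1, Option.bind_some] at h
      cases h2 : C.run r1.1 r1.2.1 (T.runFrom (T.δ qT b) x).2 with
      | none => rw [h2] at h; simp at h
      | some r2 =>
        rw [h2, Option.map_some] at h
        obtain rfl := Option.some.inj h
        have hS1 : u = true → C.UnaryStack ∧ ∀ z ∈ r1.2.1, z = false := fun hu' =>
          ⟨(hu hu').1, run_false C (hu hu').1 _ qC S r1 (hu hu').2 h1⟩
        erw [PDC.run.eq_2, NN_readBit C T u qT qC S b r1 hu h1]
        simp only
        rw [NN_run u x (T.δ qT b) r1.1 r1.2.1 r2 hS1 h2]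
        rw [hst]
        rfl

lemma NN_main (u : Bool) (hC : C.IL) (hT : T.IL) (hu : u = true → C.UnaryStack) :
    (NN C T u).IL ∧ ∀ x : List Bool, (NN C T u).output x = C.output (T.output x) := by
  have hrun : ∀ x : List Bool, ∃ r, C.run C.q0 [] (T.output x) = some r ∧
      (NN C T u).run (NN C T u).q0 [] x =
        some (cl C T (T.finalState x) r.1, r.2.1, r.2.2) := by
    intro x
    obtain ⟨r, hr⟩ := Option.isSome_iff_exists.mp (hC.1 (T.output x))
    refine ⟨r, hr, ?_⟩
    exact NN_run C T u x T.q0 C.q0 [] r (fun h' => ⟨hu h', by simp⟩) hr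
  refine ⟨⟨?_, ?_⟩, ?_⟩
  · intro x
    obtain ⟨r, _, h2⟩ := hrun x
    rw [h2]
    rfl
  · intro x y hxy
    obtain ⟨rx, hrx, hx2⟩ := hrun x
    obtain ⟨ry, hry, hy2⟩ := hrun y
    simp only [hx2, hy2, Option.map_some] at hxy
    have hpair := Option.some.inj hxy
    have hcl : cl C T (T.finalState x) rx.1 = cl C T (T.finalState y) ry.1 :=
      (Prod.ext_iff.mp hpair).1
    have houteq : rx.2.2 = ry.2.2 := (Prod.ext_iff.mp hpair).2
    have htr := (ee C T).injective hcl
    have hfs : T.finalState x = T.finalState y := (Prod.ext_iff.mp htr).1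
    have hq : rx.1 = ry.1 := (Prod.ext_iff.mp (Prod.ext_iff.mp htr).2).1
    have hTout : T.output x = T.output y := hC.2
      (show (C.run C.q0 [] (T.output x)).map (fun r => (r.1, r.2.2))
          = (C.run C.q0 [] (T.output y)).map (fun r => (r.1, r.2.2)) by
        rw [hrx, hry, Option.map_some, Option.map_some, hq, houteq])
    exact hT (show (T.output x, T.finalState x) = (T.output y, T.finalState y) by
      rw [hTout, hfs])
  · intro x
    obtain ⟨r, hr, h2⟩ := hrun x
    rw [PDC.output, PDC.output, h2, hr]
    rfl

end Comp


/-- Composition of an ILPDC with an ILFST is computable by an ILPDC; moreover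
if the compressor is unary-stack, so is the composition. -/
theorem ilpdc_comp_ilfst (C : PDC) (T : FST) (hC : C.IL) (hT : T.IL) :
    (∃ N : PDC, N.IL ∧ ∀ x : List Bool, N.output x = C.output (T.output x)) ∧
    (C.UnaryStack →
      ∃ N : PDC, N.IL ∧ N.UnaryStack ∧
        ∀ x : List Bool, N.output x = C.output (T.output x)) := by
  constructor
  · obtain ⟨hIL, hout⟩ := Comp.NN_main C T false hC hT (by simp)
    exact ⟨Comp.NN C T false, hIL, hout⟩
  · intro hCu
    obtain ⟨hIL, hout⟩ := Comp.NN_main C T true hC hT (fun _ => hCu)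
    refine ⟨Comp.NN C T true, hIL, ?_, hout⟩
    intro q b a r hδ s hs
    rw [show (Comp.NN C T true).δ q b a
      = Comp.NNδ C T true ((Comp.ee C T).symm q) b a from rfl] at hδ
    cases hsim : Comp.simRun C (T.ν ((Comp.ee C T).symm q).1 b) ((Comp.ee C T).symm q).2.1
        ((Comp.ee C T).symm q).2.2.val a.isNone with
    | none =>
      simp only [Comp.NNδ, hsim] at hδ
      cases hδ
    | some p =>
      obtain ⟨qC', s', o⟩ := p
      simp only [Comp.NNδ, hsim, if_pos rfl] at hδ
      obtain rfl := Option.some.inj hδ.symm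
      have hs2 : s ∈ List.map (fun _ => false) (s' ++ a.toList) := hs
      rw [List.mem_map] at hs2
      obtain ⟨t, -, h⟩ := hs2
      exact h.symm
end

section
/- For every ε > 0 and every k ∈ ℕ there exists k' ∈ ℕ such that for all but finitely many binary strings x and all binary strings y: D^{k'}(xy) ≤ (1+ε)·D^k(x) + D^k(y) + 2. -/
/-- A binary representation of finite-state transducers: a partial map from
binary strings onto the set of all FSTs (surjectivity). -/
def IsRep (σ : List Bool → Option FST) : Prop := ∀ T : FST, ∃ x, σ x = some T

/-- `T` has a `σ`-description of length at most `k`. -/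
def sizeLE (σ : List Bool → Option FST) (T : FST) (k : ℕ) : Prop :=
  ∃ x : List Bool, x.length ≤ k ∧ σ x = some T

namespace FSConcat

/-- generic finite-state transducer over a state type `S` -/
structure GFST (S : Type) where
  q0 : S
  δ : S → Bool → S
  ν : S → Bool → List Bool

def GFST.runFrom {S : Type} (T : GFST S) : S → List Bool → S × List Bool
  | q, [] => (q, [])
  | q, b :: x =>
    let r := T.runFrom (T.δ q b) x
    (r.1, T.ν q b ++ r.2)

noncomputable def GFST.toFST {S : Type} [Fintype S] (G : GFST S) : FST where
  n := Fintype.card S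
  pos := Fintype.card_pos_iff.mpr ⟨G.q0⟩
  q0 := Fintype.equivFin S G.q0
  δ := fun q c => Fintype.equivFin S (G.δ ((Fintype.equivFin S).symm q) c)
  ν := fun q c => G.ν ((Fintype.equivFin S).symm q) c

lemma GFST.toFST_runFrom {S : Type} [Fintype S] (G : GFST S) (s : S) (x : List Bool) :
    G.toFST.runFrom (Fintype.equivFin S s) x
      = (Fintype.equivFin S (G.runFrom s x).1, (G.runFrom s x).2) := by
  induction x generalizing s with
  | nil => simp [FST.runFrom, GFST.runFrom]; rfl
  | cons c x ih =>
    have hδ : G.toFST.δ (Fintype.equivFin S s) c = Fintype.equivFin S (G.δ s c) := by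
      simp [GFST.toFST]
    have hν : G.toFST.ν (Fintype.equivFin S s) c = G.ν s c := by simp [GFST.toFST]
    simp only [FST.runFrom, GFST.runFrom, hδ, hν, ih]
    rfl

lemma GFST.toFST_output {S : Type} [Fintype S] (G : GFST S) (x : List Bool) :
    G.toFST.output x = (G.runFrom G.q0 x).2 := by
  have h := G.toFST_runFrom G.q0 x
  simp [FST.output, GFST.toFST] at h ⊢
  rw [h]

lemma GFST.runFrom_append {S : Type} (G : GFST S) (s : S) (u v : List Bool) :
    G.runFrom s (u ++ v)
      = ((G.runFrom (G.runFrom s u).1 v).1,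
         (G.runFrom s u).2 ++ (G.runFrom (G.runFrom s u).1 v).2) := by
  induction u generalizing s with
  | nil => simp [GFST.runFrom]
  | cons c u ih => simp [GFST.runFrom, ih]

lemma FST.runFrom_append (A : FST) (s : Fin A.n) (u v : List Bool) :
    A.runFrom s (u ++ v)
      = ((A.runFrom (A.runFrom s u).1 v).1,
         (A.runFrom s u).2 ++ (A.runFrom (A.runFrom s u).1 v).2) := by
  induction u generalizing s with
  | nil => simp [FST.runFrom]
  | cons c u ih => simp [FST.runFrom, ih]

end FSConcat

namespace FSConcat

/-- Self-delimiting encoding: blocks of size `b+1` prefixed with `true`;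
final short block: `false`, then each bit doubled, then terminator `false, true`. -/
def encB (b : ℕ) (p : List Bool) : List Bool :=
  if h : b + 1 ≤ p.length then
    true :: (p.take (b + 1) ++ encB b (p.drop (b + 1)))
  else
    false :: ((p.flatMap fun c => [c, c]) ++ [false, true])
termination_by p.length
decreasing_by simp; omega

abbrev St (b : ℕ) (A B : FST) : Type :=
  (Fin A.n × (Option (Fin (b + 1)) ⊕ Option Bool)) ⊕ Fin B.n

/-- The combined machine: decode blocks simulating `A`, then simulate `B`. -/
def mach (b : ℕ) (A B : FST) : GFST (St b A B) where
  q0 := Sum.inl (A.q0, Sum.inl none)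
  δ := fun s c =>
    match s with
    | Sum.inr t => Sum.inr (B.δ t c)
    | Sum.inl (a, Sum.inl none) =>
        if c then Sum.inl (a, Sum.inl (some (Fin.last b)))
        else Sum.inl (a, Sum.inr none)
    | Sum.inl (a, Sum.inl (some j)) =>
        if j.1 = 0 then Sum.inl (A.δ a c, Sum.inl none)
        else Sum.inl (A.δ a c, Sum.inl (some ⟨j.1 - 1, by omega⟩))
    | Sum.inl (a, Sum.inr none) => Sum.inl (a, Sum.inr (some c))
    | Sum.inl (a, Sum.inr (some d)) =>
        if d = false ∧ c = true then Sum.inr B.q0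
        else Sum.inl (A.δ a d, Sum.inr none)
  ν := fun s c =>
    match s with
    | Sum.inr t => B.ν t c
    | Sum.inl (_, Sum.inl none) => []
    | Sum.inl (a, Sum.inl (some _)) => A.ν a c
    | Sum.inl (_, Sum.inr none) => []
    | Sum.inl (a, Sum.inr (some d)) =>
        if d = false ∧ c = true then [] else A.ν a d

variable {b : ℕ} {A B : FST}

lemma mach_block (j : ℕ) (hj : j ≤ b) :
    ∀ (chunk : List Bool), chunk.length = j + 1 → ∀ a : Fin A.n,
    (mach b A B).runFrom (Sum.inl (a, Sum.inl (some ⟨j, by omega⟩))) chunk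
      = (Sum.inl ((A.runFrom a chunk).1, Sum.inl none), (A.runFrom a chunk).2) := by
  induction j with
  | zero =>
    rintro (_ | ⟨c, (_ | _)⟩) hl a <;> simp at hl
    simp [GFST.runFrom, mach, FST.runFrom]
  | succ j ih =>
    rintro (_ | ⟨c, chunk⟩) hl a
    · simp at hl
    · simp at hl
      have hδ : (mach b A B).δ (Sum.inl (a, Sum.inl (some ⟨j + 1, by omega⟩))) c
          = Sum.inl (A.δ a c, Sum.inl (some ⟨j, by omega⟩)) := by
        simp [mach]
      have hν : (mach b A B).ν (Sum.inl (a, Sum.inl (some ⟨j + 1, by omega⟩))) c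
          = A.ν a c := by simp [mach]
      simp only [GFST.runFrom, FST.runFrom, hδ, hν]
      rw [ih (by omega) chunk hl (A.δ a c)]

end FSConcat

namespace FSConcat

variable {b : ℕ} {A B : FST}

lemma mach_double (p : List Bool) : ∀ a : Fin A.n,
    (mach b A B).runFrom (Sum.inl (a, Sum.inr none)) (p.flatMap fun c => [c, c])
      = (Sum.inl ((A.runFrom a p).1, Sum.inr none), (A.runFrom a p).2) := by
  induction p with
  | nil => intro a; simp [GFST.runFrom, FST.runFrom]
  | cons c p ih =>
    intro a
    have hδ1 : (mach b A B).δ (Sum.inl (a, Sum.inr none)) c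
        = Sum.inl (a, Sum.inr (some c)) := by simp [mach]
    have hν1 : (mach b A B).ν (Sum.inl (a, Sum.inr none)) c = [] := by simp [mach]
    have hδ2 : (mach b A B).δ (Sum.inl (a, Sum.inr (some c))) c
        = Sum.inl (A.δ a c, Sum.inr none) := by cases c <;> simp [mach]
    have hν2 : (mach b A B).ν (Sum.inl (a, Sum.inr (some c))) c = A.ν a c := by
      cases c <;> simp [mach]
    have hfm : ((c :: p).flatMap fun c => [c, c]) = c :: c :: (p.flatMap fun c => [c, c]) :=
      rfl
    rw [hfm]
    simp only [GFST.runFrom, FST.runFrom, hδ1, hν1, hδ2, hν2, ih]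
    simp

lemma mach_bsim (v : List Bool) : ∀ s : Fin B.n,
    (mach b A B).runFrom (Sum.inr s) v
      = (Sum.inr (B.runFrom s v).1, (B.runFrom s v).2) := by
  induction v with
  | nil => intro s; simp [GFST.runFrom, FST.runFrom]
  | cons c v ih =>
    intro s
    have hδ : (mach b A B).δ (Sum.inr s) c = Sum.inr (B.δ s c) := by simp [mach]
    have hν : (mach b A B).ν (Sum.inr s) c = B.ν s c := by simp [mach]
    simp only [GFST.runFrom, FST.runFrom, hδ, hν, ih]

lemma mach_main (p : List Bool) (a : Fin A.n) (rest : List Bool) :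
    (mach b A B).runFrom (Sum.inl (a, Sum.inl none)) (encB b p ++ rest)
      = (((mach b A B).runFrom (Sum.inr B.q0) rest).1,
         (A.runFrom a p).2 ++ ((mach b A B).runFrom (Sum.inr B.q0) rest).2) := by
  rw [encB]
  by_cases h : b + 1 ≤ p.length
  · rw [dif_pos h]
    have hδ : (mach b A B).δ (Sum.inl (a, Sum.inl none)) true
        = Sum.inl (a, Sum.inl (some (Fin.last b))) := by simp [mach]
    have hν : (mach b A B).ν (Sum.inl (a, Sum.inl none)) true = [] := by simp [mach]
    have hblk : (mach b A B).runFrom (Sum.inl (a, Sum.inl (some (Fin.last b))))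
          (p.take (b + 1))
        = (Sum.inl ((A.runFrom a (p.take (b + 1))).1, Sum.inl none),
           (A.runFrom a (p.take (b + 1))).2) :=
      mach_block b le_rfl _ (by simp [List.length_take]; omega) a
    have hrec := mach_main (p.drop (b + 1)) (A.runFrom a (p.take (b + 1))).1 rest
    simp only [List.cons_append, List.append_eq, List.append_assoc, GFST.runFrom, hδ, hν]
    rw [GFST.runFrom_append, hblk, hrec]
    conv_rhs => rw [← List.take_append_drop (b + 1) p]
    rw [FST.runFrom_append]
    simp [List.append_assoc]
  · rw [dif_neg h]
    have hδ : (mach b A B).δ (Sum.inl (a, Sum.inl none)) false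
        = Sum.inl (a, Sum.inr none) := by simp [mach]
    have hν : (mach b A B).ν (Sum.inl (a, Sum.inl none)) false = [] := by simp [mach]
    simp only [List.cons_append, List.append_eq, List.append_assoc, GFST.runFrom, hδ, hν]
    rw [GFST.runFrom_append, mach_double p a]
    have hδ2 : (mach b A B).δ (Sum.inl ((A.runFrom a p).1, Sum.inr none)) false
        = Sum.inl ((A.runFrom a p).1, Sum.inr (some false)) := by simp [mach]
    have hν2 : (mach b A B).ν (Sum.inl ((A.runFrom a p).1, Sum.inr none)) false = [] := by
      simp [mach]
    have hδ3 : (mach b A B).δ (Sum.inl ((A.runFrom a p).1, Sum.inr (some false))) true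
        = Sum.inr B.q0 := by simp [mach]
    have hν3 : (mach b A B).ν (Sum.inl ((A.runFrom a p).1, Sum.inr (some false))) true
        = [] := by simp [mach]
    simp only [List.cons_append, List.nil_append, GFST.runFrom, hδ2, hν2, hδ3, hν3]
termination_by p.length
decreasing_by simp; omega

lemma mach_output (p q : List Bool) :
    (mach b A B).toFST.output (encB b p ++ q) = A.output p ++ B.output q := by
  rw [GFST.toFST_output]
  have h0 : (mach b A B).q0 = Sum.inl (A.q0, Sum.inl none) := rfl
  rw [h0, mach_main, mach_bsim]
  rfl

lemma flatMap_double_length (p : List Bool) :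
    (p.flatMap fun c => [c, c]).length = 2 * p.length := by
  induction p with
  | nil => simp
  | cons c p ih =>
    have hfm : ((c :: p).flatMap fun c => [c, c]) = c :: c :: (p.flatMap fun c => [c, c]) :=
      rfl
    rw [hfm, List.length_cons, List.length_cons, ih, List.length_cons]
    omega

lemma encB_length (p : List Bool) :
    (encB b p).length ≤ p.length + p.length / (b + 1) + (b + 3) := by
  rw [encB]
  by_cases h : b + 1 ≤ p.length
  · rw [dif_pos h]
    have hrec := encB_length (p.drop (b + 1))
    have hlen : (p.drop (b + 1)).length = p.length - (b + 1) := by simp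
    have hdiv : p.length / (b + 1) = (p.length - (b + 1)) / (b + 1) + 1 :=
      Nat.div_eq_sub_div (by omega) h
    simp only [List.length_cons, List.length_append, List.length_take, hlen] at hrec ⊢
    omega
  · rw [dif_neg h]
    rw [List.length_cons, List.length_append, flatMap_double_length]
    have hL : p.length ≤ b := by omega
    simp only [List.length_cons, List.length_nil]
    generalize p.length / (b + 1) = d
    omega
termination_by p.length
decreasing_by simp; omega

end FSConcat

namespace FSConcat

lemma runFrom_out_length (A : FST) (C : ℕ) (hC : ∀ s c, (A.ν s c).length ≤ C) :
    ∀ (p : List Bool) (s : Fin A.n), (A.runFrom s p).2.length ≤ C * p.length := by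
  intro p
  induction p with
  | nil => intro s; simp [FST.runFrom]
  | cons c p ih =>
    intro s
    simp only [FST.runFrom, List.length_append, List.length_cons]
    have := ih (A.δ s c)
    have := hC s c
    calc (A.ν s c).length + (A.runFrom (A.δ s c) p).2.length
        ≤ C + C * p.length := by omega
      _ = C * (p.length + 1) := by ring

end FSConcat

/-- For every `ε > 0` and `k` there is `k'` such that for all but finitely
many `x` and all `y`: `D^{k'}(xy) ≤ (1+ε)·D^k(x) + D^k(y) + 2`, phrased via
witnessing programs `p` for `x` and `q` for `y`. -/
theorem Dfs_concat_upper (σ : List Bool → Option FST) (hσ : IsRep σ)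
    (ε : ℝ) (hε : 0 < ε) (k : ℕ) :
    ∃ k' : ℕ, ∀ᶠ x : List Bool in Filter.cofinite, ∀ y p q : List Bool, ∀ A B : FST,
      sizeLE σ A k → sizeLE σ B k → A.output p = x → B.output q = y →
      ∃ (M : FST) (r : List Bool), sizeLE σ M k' ∧ M.output r = x ++ y ∧
        (r.length : ℝ) ≤ (1 + ε) * p.length + q.length + 2 := by
  classical
  set b : ℕ := ⌈2 / ε⌉₊ with hbdef
  set 𝒜 : Set FST := {T | sizeLE σ T k} with h𝒜def
  -- 𝒜 is finite
  have h𝒜 : 𝒜.Finite := by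
    have h1 : {l : List Bool | l.length ≤ k}.Finite := List.finite_length_le Bool k
    have h2 : (σ '' {l | l.length ≤ k}).Finite := h1.image σ
    have h3 : ((some : FST → Option FST) ⁻¹' (σ '' {l | l.length ≤ k})).Finite :=
      h2.preimage ((Option.some_injective FST).injOn)
    refine h3.subset ?_
    rintro T ⟨x, hx1, hx2⟩
    exact ⟨x, hx1, hx2⟩
  -- uniform bound on per-step output lengths
  obtain ⟨C, hC1, hC⟩ : ∃ C : ℕ, 1 ≤ C ∧ ∀ T ∈ 𝒜, ∀ s c, (T.ν s c).length ≤ C := by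
    obtain ⟨C0, hC0⟩ := (h𝒜.image (fun T : FST =>
      (Finset.univ : Finset (Fin T.n × Bool)).sup fun z => (T.ν z.1 z.2).length)).bddAbove
    refine ⟨C0 + 1, by omega, ?_⟩
    intro T hT s c
    have h1 : (T.ν s c).length
        ≤ (Finset.univ : Finset (Fin T.n × Bool)).sup fun z => (T.ν z.1 z.2).length :=
      Finset.le_sup (f := fun z => (T.ν z.1 z.2).length) (Finset.mem_univ (s, c))
    have h2 : ((Finset.univ : Finset (Fin T.n × Bool)).sup fun z => (T.ν z.1 z.2).length)
        ≤ C0 := hC0 ⟨T, hT, rfl⟩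
    omega
  -- bound on description lengths of the combined machines
  obtain ⟨k', hk'⟩ : ∃ k' : ℕ, ∀ T ∈ 𝒜, ∀ U ∈ 𝒜,
      ∃ d : List Bool, d.length ≤ k' ∧ σ d = some ((FSConcat.mach b T U).toFST) := by
    obtain ⟨k', hk'⟩ := ((h𝒜.prod h𝒜).image (fun P : FST × FST =>
      (Classical.choose (hσ ((FSConcat.mach b P.1 P.2).toFST))).length)).bddAbove
    refine ⟨k', ?_⟩
    intro T hT U hU
    have hm : (Classical.choose (hσ ((FSConcat.mach b T U).toFST))).length ≤ k' :=
      hk' ⟨(T, U), ⟨hT, hU⟩, rfl⟩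
    exact ⟨Classical.choose (hσ ((FSConcat.mach b T U).toFST)), hm,
      Classical.choose_spec (hσ ((FSConcat.mach b T U).toFST))⟩
  set N : ℕ := ⌈2 * (b + 1) / ε⌉₊ with hNdef
  refine ⟨k', ?_⟩
  have key : ∀ x : List Bool, C * N ≤ x.length → ∀ y p q : List Bool, ∀ A B : FST,
      sizeLE σ A k → sizeLE σ B k → A.output p = x → B.output q = y →
      ∃ (M : FST) (r : List Bool), sizeLE σ M k' ∧ M.output r = x ++ y ∧
        (r.length : ℝ) ≤ (1 + ε) * p.length + q.length + 2 := by
    intro x hxlen y p q A B hA hB hxp hyq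
    obtain ⟨d, hd1, hd2⟩ := hk' A hA B hB
    refine ⟨(FSConcat.mach b A B).toFST, FSConcat.encB b p ++ q, ⟨d, hd1, hd2⟩, ?_, ?_⟩
    · rw [FSConcat.mach_output, hxp, hyq]
    · -- length bound
      have hout : x.length ≤ C * p.length := by
        rw [← hxp]
        exact FSConcat.runFrom_out_length A C (hC A hA) p A.q0
      have hpN : N ≤ p.length := by
        have : C * N ≤ C * p.length := le_trans hxlen hout
        exact Nat.le_of_mul_le_mul_left this (by omega)
      have henc : (FSConcat.encB b p).length ≤ p.length + p.length / (b + 1) + (b + 3) :=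
        FSConcat.encB_length p
      -- real arithmetic
      have hb : (2 : ℝ) / ε ≤ b := Nat.le_ceil _
      have hN : (2 * (b + 1) : ℝ) / ε ≤ N := by
        have := Nat.le_ceil (2 * ((b : ℝ) + 1) / ε)
        rw [hNdef]
        push_cast
        push_cast at this
        linarith
      have hplen : ((2 * (b + 1) : ℝ)) ≤ ε * p.length := by
        have h1 : ((N : ℝ)) ≤ p.length := by exact_mod_cast hpN
        have h2 : (2 * ((b : ℝ) + 1)) / ε ≤ p.length := by push_cast at hN ⊢; linarith
        calc (2 * ((b : ℝ) + 1)) = ε * ((2 * ((b : ℝ) + 1)) / ε) := by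
              field_simp
          _ ≤ ε * p.length := by
              apply mul_le_mul_of_nonneg_left h2 (le_of_lt hε)
      have hdiv : ((p.length / (b + 1) : ℕ) : ℝ) ≤ (ε / 2) * p.length := by
        have h1 : ((p.length / (b + 1) : ℕ) : ℝ) ≤ (p.length : ℝ) / ((b : ℝ) + 1) := by
          have := Nat.cast_div_le (α := ℝ) (m := p.length) (n := b + 1)
          push_cast at this
          linarith
        have hb1 : (0 : ℝ) < (b : ℝ) + 1 := by positivity
        have h2 : (p.length : ℝ) / ((b : ℝ) + 1) ≤ (ε / 2) * p.length := by
          rw [div_le_iff₀ hb1]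
          have h3 : (2 : ℝ) ≤ ε * ((b : ℝ) + 1) := by
            have : (2 : ℝ) / ε ≤ (b : ℝ) + 1 := by linarith
            calc (2 : ℝ) = ε * (2 / ε) := by field_simp
              _ ≤ ε * ((b : ℝ) + 1) := by
                  apply mul_le_mul_of_nonneg_left this (le_of_lt hε)
          nlinarith [Nat.cast_nonneg (α := ℝ) p.length]
        linarith
      have hbp : ((b : ℝ) + 1) ≤ (ε / 2) * p.length := by linarith
      have hlen : ((FSConcat.encB b p ++ q).length : ℝ)
          ≤ (p.length : ℝ) + ((p.length / (b + 1) : ℕ) : ℝ) + ((b : ℝ) + 3) + q.length := by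
        rw [List.length_append]
        push_cast
        have : ((FSConcat.encB b p).length : ℝ)
            ≤ (p.length : ℝ) + ((p.length / (b + 1) : ℕ) : ℝ) + ((b : ℝ) + 3) := by
          exact_mod_cast henc
        linarith
      calc ((FSConcat.encB b p ++ q).length : ℝ)
          ≤ (p.length : ℝ) + ((p.length / (b + 1) : ℕ) : ℝ) + ((b : ℝ) + 3) + q.length :=
            hlen
        _ ≤ (p.length : ℝ) + (ε / 2) * p.length + ((ε / 2) * p.length + 2) + q.length := by
            linarith
        _ = (1 + ε) * p.length + q.length + 2 := by ring
  rw [Filter.eventually_cofinite]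
  apply (List.finite_length_lt Bool (C * N)).subset
  intro x hx
  simp only [Set.mem_setOf_eq] at hx ⊢
  by_contra h2
  exact hx (key x (by omega))
end
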